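/- Let M be an invertible n×n matrix over ℤ/2ℤ and let R(M) denote the minimal rank of M + D over all diagonal matrices D over ℤ/2ℤ. Then rank(M + I)/2 ≤ R(M) ≤ rank(M + I). -/
import Mathlib

open Matrix

lemma rank_add_le' {n : ℕ} (A B : Matrix (Fin n) (Fin n) (ZMod 2)) :
    (A + B).rank ≤ A.rank + B.rank := by
  unfold Matrix.rank
  have h : LinearMap.range (A + B).mulVecLin ≤
      LinearMap.range A.mulVecLin ⊔ LinearMap.range B.mulVecLin := by
    rw [Matrix.mulVecLin_add]
    rintro x ⟨v, rfl⟩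
    exact Submodule.add_mem_sup ⟨v, rfl⟩ ⟨v, rfl⟩
  calc Module.finrank (ZMod 2) (LinearMap.range (A + B).mulVecLin)
      ≤ Module.finrank (ZMod 2) (LinearMap.range A.mulVecLin ⊔ LinearMap.range B.mulVecLin : Submodule (ZMod 2) (Fin n → ZMod 2)) :=
        Submodule.finrank_mono h
    _ ≤ _ := le_trans (Submodule.finrank_add_le_finrank_add_finrank _ _) (by simp)

noncomputable def minDiagRank {n : ℕ} (M : Matrix (Fin n) (Fin n) (ZMod 2)) : ℕ :=
  sInf {r | ∃ D : Matrix (Fin n) (Fin n) (ZMod 2), D.IsDiag ∧ (M + D).rank = r}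

theorem minDiagRank_bounds_of_isUnit {n : ℕ} (M : Matrix (Fin n) (Fin n) (ZMod 2))
    (hM : IsUnit M) :
    (M + 1).rank ≤ 2 * minDiagRank M ∧ minDiagRank M ≤ (M + 1).rank := by
  have hub : minDiagRank M ≤ (M + 1).rank :=
    Nat.sInf_le ⟨1, Matrix.isDiag_one, rfl⟩
  refine ⟨?_, hub⟩
  -- the set is nonempty, so sInf is attained
  have hne : {r | ∃ D : Matrix (Fin n) (Fin n) (ZMod 2), D.IsDiag ∧ (M + D).rank = r}.Nonempty :=
    ⟨(M + 1).rank, 1, Matrix.isDiag_one, rfl⟩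
  obtain ⟨D, hD, hr⟩ := Nat.sInf_mem hne
  unfold minDiagRank
  rw [← hr]
  -- write D as diagonal of its diag
  set d := D.diag with hd
  have hDd : D = Matrix.diagonal d := (hD.diagonal_diag).symm
  -- M + 1 = (M + D) + (D + 1)
  have key : M + 1 = (M + D) + (D + 1) := by
    have h0 : D + D = 0 := by
      ext i j; exact CharTwo.add_self_eq_zero _
    rw [add_assoc, ← add_assoc D D 1, h0, zero_add]
  have h1 : (M + 1).rank ≤ (M + D).rank + (D + 1).rank := by
    rw [key]; exact rank_add_le' _ _
  -- rank of D+1 as diagonal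
  have hD1 : (D + 1 : Matrix (Fin n) (Fin n) (ZMod 2)) = Matrix.diagonal (d + 1) := by
    rw [hDd, ← Matrix.diagonal_one, Matrix.diagonal_add]
    rfl
  have hrD1 : (D + 1).rank = Fintype.card {i // (d i + 1) ≠ 0} := by
    rw [hD1, Matrix.rank_diagonal]
    rfl
  have hrD : D.rank = Fintype.card {i // d i ≠ 0} := by
    rw [hDd, Matrix.rank_diagonal]
  -- complementary counts
  have hcard : Fintype.card {i // d i ≠ 0} + Fintype.card {i // (d i + 1) ≠ 0} = n := by
    classical
    have hiff : ∀ i : Fin n, (d i + 1 ≠ 0) ↔ ¬ (d i ≠ 0) := by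
      intro i
      have h2 : ∀ x : ZMod 2, x = 0 ∨ x = 1 := by decide
      rcases h2 (d i) with h | h <;> simp [h] <;> decide
    simp only [Fintype.card_subtype]
    rw [Finset.filter_congr (fun i _ => hiff i),
      Finset.card_filter_add_card_filter_not, Finset.card_univ, Fintype.card_fin]
  -- rank M = n and subadditivity
  have hM2 : M.rank = n := by
    rw [Matrix.rank_of_isUnit M hM, Fintype.card_fin]
  have h2 : n ≤ (M + D).rank + D.rank := by
    have : M = (M + D) + D := by
      rw [add_assoc]
      have : D + D = 0 := by ext i j; exact CharTwo.add_self_eq_zero _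
      rw [this, add_zero]
    calc n = M.rank := hM2.symm
      _ = ((M + D) + D).rank := by rw [← this]
      _ ≤ _ := rank_add_le' _ _
  omega
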